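/- Let x ∈ X_{n,k} with cyclic parenthesis matching applied, and let y be a Dyck word of length 2ℓ ≥ 2. Then the number of cyclic descents of y (occurrences of 10) equals |W(y)|, where W is defined by: W(1 u 0) = {1} if u = ε, W(1 u 0) = W(u) ⊕ 1 if u ≠ ε, and W(y_1 ⋯ y_m) = W(y_1) ∪ ⋯ ∪ W(y_m) for y_i ∈ D'. -/

import Mathlib

/-- A Dyck word: equal numbers of 1s (`true`) and 0s (`false`), with every prefix
containing at least as many 1s as 0s. -/
def IsDyck (w : List Bool) : Prop :=
  w.count true = w.count false ∧
    ∀ i, (w.take i).count false ≤ (w.take i).count true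

/-- A word in `D'`: a nonempty Dyck word with strictly more 1s than 0s in every proper
nonempty prefix, i.e. a word `1 u 0` with `u ∈ D`. -/
def IsPrimeDyck (w : List Bool) : Prop :=
  IsDyck w ∧ w ≠ [] ∧ ∀ i, 0 < i → i < w.length →
    (w.take i).count false < (w.take i).count true

/-- `X ⊕ 1`: increment one of the largest elements of the multiset `X` by `1`. -/
def oplusOne (S : Multiset ℕ) : Multiset ℕ := (S.sup + 1) ::ₘ S.erase S.sup

/-- The recursion `W`: `W(10) = {1}`; `W(1 u 0) = W(u) ⊕ 1` for `u ≠ ε`;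
`W(y₁ ⋯ y_m) = W(y₁) ∪ ⋯ ∪ W(y_m)` for the prime factorization. -/
inductive WSpec : List Bool → Multiset ℕ → Prop
  | app {y₁ y₂ : List Bool} {S₁ S₂ : Multiset ℕ} :
      IsPrimeDyck y₁ → IsDyck y₂ → y₂ ≠ [] →
      WSpec y₁ S₁ → WSpec y₂ S₂ → WSpec (y₁ ++ y₂) (S₁ + S₂)
  | single : WSpec [true, false] {1}
  | step {u : List Bool} {S : Multiset ℕ} :
      IsDyck u → u ≠ [] → WSpec u S → WSpec (true :: (u ++ [false])) (oplusOne S)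

/-- The number of cyclic descents (occurrences of `10`) of a word. -/
def cyclicDescents (x : List Bool) : ℕ :=
  ((List.range x.length).filter
    (fun i => x.getD i false && !(x.getD ((i + 1) % x.length) false))).length


section Aux

/-- Linear descent count. -/
def desc : List Bool → ℕ
  | [] => 0
  | [_] => 0
  | a :: b :: l => (if a = true ∧ b = false then 1 else 0) + desc (b :: l)

lemma desc_nil : desc [] = 0 := rfl

lemma desc_false_cons (l : List Bool) : desc (false :: l) = desc l := by
  cases l <;> simp [desc]

lemma desc_true_cons (l : List Bool) :
    desc (true :: l) = (if l.head? = some false then 1 else 0) + desc l := by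
  match l with
  | [] => simp [desc]
  | b :: t => cases b <;> simp [desc]

lemma desc_append (l₁ l₂ : List Bool) (h : l₁.getLast? ≠ some true) :
    desc (l₁ ++ l₂) = desc l₁ + desc l₂ := by
  induction l₁ with
  | nil => simp [desc]
  | cons a t ih =>
    match t, a with
    | [], a =>
      have : a = false := by
        cases a
        · rfl
        · simp at h
      subst this
      simp [desc_false_cons, desc]
    | b :: t, a =>
      rw [List.getLast?_cons_cons] at h
      cases a
      · simp only [List.cons_append] at ih ⊢
        rw [desc_false_cons, desc_false_cons, ih h]
      · simp only [List.cons_append] at ih ⊢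
        rw [desc_true_cons, desc_true_cons, ih h]
        simp only [List.head?_cons]
        cases b <;> simp +arith

/-- Linear (non-cyclic) index-based descent count. -/
def linD (x : List Bool) : ℕ :=
  ((List.range x.length).filter
    (fun i => x.getD i false && !(x.getD (i + 1) false))).length

lemma linD_cons (a : Bool) (l : List Bool) :
    linD (a :: l) = (if a && !(l.getD 0 false) then 1 else 0) + linD l := by
  unfold linD
  rw [List.length_cons, List.range_succ_eq_map, List.filter_cons]
  simp only [List.getD_cons_zero, List.getD_cons_succ, List.filter_map, List.length_map]
  rw [Function.comp_def]
  split <;> simp +arith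

lemma linD_eq_desc (x : List Bool) :
    linD x = desc x + (if x.getLast? = some true then 1 else 0) := by
  induction x with
  | nil => simp [linD, desc_nil]
  | cons a l ih =>
    rw [linD_cons, ih]
    match l, a with
    | [], false => simp [desc_false_cons, desc_nil]
    | [], true => simp [desc_true_cons, desc_nil]
    | b :: t, false =>
      rw [desc_false_cons, List.getLast?_cons_cons]
      simp
    | b :: t, true =>
      rw [desc_true_cons, List.getLast?_cons_cons]
      simp only [List.getD_cons_zero, List.head?_cons]
      cases b <;> simp +arith

lemma cyclic_eq_linD (x : List Bool) (h : x.getLast? = some false) :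
    cyclicDescents x = linD x := by
  unfold cyclicDescents linD
  congr 1
  apply List.filter_congr
  intro i hi
  rw [List.mem_range] at hi
  rcases lt_or_eq_of_le (Nat.succ_le_of_lt hi) with h1 | h1
  · rw [Nat.mod_eq_of_lt h1]
  · have hlast : x.getD i false = false := by
      have : x.getLast? = x[x.length - 1]? := List.getLast?_eq_getElem?
      rw [h] at this
      have hi' : i = x.length - 1 := by omega
      rw [List.getD_eq_getElem?_getD, hi', ← this]
      rfl
    rw [List.getD_eq_getElem?_getD] at hlast
    simp [hlast]

lemma dyck_head? {y : List Bool} (h : IsDyck y) (hne : y ≠ []) :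
    y.head? = some true := by
  obtain ⟨a, l, rfl⟩ := List.exists_cons_of_ne_nil hne
  have h1 := h.2 1
  cases a
  · simp [List.take_succ_cons] at h1
  · rfl

lemma dyck_getLast? {y : List Bool} (h : IsDyck y) (hne : y ≠ []) :
    y.getLast? = some false := by
  obtain rfl | ⟨l, a, rfl⟩ := y.eq_nil_or_concat
  · exact absurd rfl hne
  rw [List.concat_eq_append] at h hne ⊢
  have h1 := h.2 l.length
  have ht : (l ++ [a]).take l.length = l := by
    rw [List.take_append_of_le_length le_rfl, List.take_length]
  rw [ht] at h1
  have hc := h.1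
  rw [List.count_append, List.count_append] at hc
  cases a
  · simp [List.getLast?_concat]
  · simp [List.count_singleton] at hc
    omega

lemma sup_mem {S : Multiset ℕ} (h : S ≠ 0) : S.sup ∈ S := by
  induction S using Multiset.induction with
  | empty => exact absurd rfl h
  | cons a T ih =>
    rw [Multiset.sup_cons]
    rcases eq_or_ne T 0 with rfl | hT
    · simp
    · rcases le_total a T.sup with hle | hle
      · rw [sup_eq_right.mpr hle]
        exact Multiset.mem_cons_of_mem (ih hT)
      · rw [sup_eq_left.mpr hle]
        exact Multiset.mem_cons_self a _

lemma card_oplusOne {S : Multiset ℕ} (h : S ≠ 0) :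
    (oplusOne S).card = S.card := by
  have hm := sup_mem h
  have hpos : 0 < S.card := Multiset.card_pos.mpr h
  rw [oplusOne, Multiset.card_cons, Multiset.card_erase_of_mem hm]
  exact Nat.succ_pred_eq_of_pos hpos

lemma wspec_ne_zero {y : List Bool} {S : Multiset ℕ} (w : WSpec y S) : S ≠ 0 := by
  induction w with
  | app _ _ _ _ _ ih₁ ih₂ =>
    intro hz
    rw [add_eq_zero] at hz
    exact ih₁ hz.1
  | single => simp
  | step _ _ _ _ => exact Multiset.cons_ne_zero

lemma wspec_card {y : List Bool} {S : Multiset ℕ} (w : WSpec y S) :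
    desc y = S.card := by
  induction w with
  | app h₁ h₂ hne₂ w₁ w₂ ih₁ ih₂ =>
    rw [desc_append _ _ (by rw [dyck_getLast? h₁.1 h₁.2.1]; simp), ih₁, ih₂,
      Multiset.card_add]
  | single =>
    rw [desc_true_cons]
    simp [desc_false_cons, desc_nil]
  | @step u S hu hune w ih =>
    obtain ⟨a, t, rfl⟩ := List.exists_cons_of_ne_nil hune
    have ha : a = true := by
      have := dyck_head? hu hune
      simpa using this
    subst ha
    rw [desc_true_cons]
    have hgl : (true :: t).getLast? ≠ some true := by
      rw [dyck_getLast? hu hune]; simp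
    rw [desc_append _ _ hgl]
    have : desc [false] = 0 := rfl
    rw [this, ih, card_oplusOne (wspec_ne_zero w)]
    simp

lemma exists_split {y : List Bool} (h : IsDyck y) (hne : y ≠ []) :
    ∃ m, 0 < m ∧ m ≤ y.length ∧ IsPrimeDyck (y.take m) ∧ IsDyck (y.drop m) := by
  classical
  have hlp : 0 < y.length := List.length_pos_iff.mpr hne
  have hP : ∃ m, 0 < m ∧ (y.take m).count true = (y.take m).count false :=
    ⟨y.length, hlp, by rw [List.take_length]; exact h.1⟩
  set m := Nat.find hP with hmdef
  have hm : 0 < m ∧ (y.take m).count true = (y.take m).count false := by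
    rw [hmdef]; exact Nat.find_spec hP
  have hmin : ∀ i, i < m → ¬(0 < i ∧ (y.take i).count true = (y.take i).count false) := by
    rw [hmdef]; exact fun i hi => Nat.find_min hP hi
  have hmle : m ≤ y.length := by
    rw [hmdef]; exact Nat.find_le ⟨hlp, by rw [List.take_length]; exact h.1⟩
  have hlt : (y.take m).length = m := by rw [List.length_take]; omega
  refine ⟨m, hm.1, hmle, ⟨⟨hm.2, ?_⟩, ?_, ?_⟩, ?_, ?_⟩
  · intro i
    rw [List.take_take]
    exact h.2 (min i m)
  · intro hz
    rw [hz] at hlt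
    simp at hlt
    omega
  · intro i hi0 hilt
    rw [hlt] at hilt
    rw [List.take_take, min_eq_left (le_of_lt hilt)]
    have hle := h.2 i
    have hnee : ¬((y.take i).count true = (y.take i).count false) := by
      intro heq
      exact hmin i hilt ⟨hi0, heq⟩
    omega
  · have htad := List.take_append_drop m y
    have hc := h.1
    rw [← htad, List.count_append, List.count_append] at hc
    have := hm.2
    omega
  · intro i
    have hta : y.take (m + i) = y.take m ++ (y.drop m).take i := List.take_add
    have h2 := h.2 (m + i)
    rw [hta, List.count_append, List.count_append] at h2
    have := hm.2
    omega

lemma prime_decomp {y : List Bool} (h : IsPrimeDyck y) :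
    ∃ u, IsDyck u ∧ y = true :: (u ++ [false]) := by
  obtain ⟨hd, hne, hstrict⟩ := h
  have hhead := dyck_head? hd hne
  have hlast := dyck_getLast? hd hne
  obtain ⟨a, t, rfl⟩ := List.exists_cons_of_ne_nil hne
  have ha : a = true := by simpa using hhead
  subst ha
  have htne : t ≠ [] := by
    rintro rfl
    simp at hlast
  obtain rfl | ⟨u, b, rfl⟩ := t.eq_nil_or_concat
  · exact absurd rfl htne
  rw [List.concat_eq_append] at *
  have hb : b = false := by
    have : (true :: (u ++ [b])).getLast? = some b := by
      rw [← List.cons_append, List.getLast?_concat]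
    rw [this] at hlast
    simpa using hlast
  subst hb
  refine ⟨u, ⟨?_, ?_⟩, rfl⟩
  · have hc := hd.1
    simp only [List.count_cons, List.count_append, List.count_singleton,
      List.count_nil] at hc
    simp at hc
    omega
  · intro i
    rcases le_or_gt u.length i with hle | hlti
    · rw [List.take_of_length_le hle]
      have hc := hd.1
      simp only [List.count_cons, List.count_append, List.count_singleton,
        List.count_nil] at hc
      simp at hc
      omega
    · have hlen : (true :: (u ++ [false])).length = u.length + 2 := by simp
      have hs := hstrict (i + 1) (by omega) (by omega)
      rw [List.take_succ_cons, List.take_append_of_le_length (le_of_lt hlti)] at hs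
      simp only [List.count_cons] at hs
      simp at hs
      omega

lemma wspec_exists : ∀ n (y : List Bool), y.length ≤ n → IsDyck y → y ≠ [] →
    ∃ S, WSpec y S := by
  intro n
  induction n with
  | zero =>
    intro y hlen hd hne
    have := List.length_pos_iff.mpr hne
    omega
  | succ n ih =>
    intro y hlen hd hne
    obtain ⟨m, hm0, hmle, hp, hd2⟩ := exists_split hd hne
    rcases eq_or_ne (y.drop m) [] with hdrop | hdrop
    · have hmlen : y.length ≤ m := by
        have : (y.drop m).length = y.length - m := List.length_drop
        rw [hdrop] at this
        simp at this
        omega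
      have hy : y.take m = y := List.take_of_length_le hmlen
      rw [hy] at hp
      obtain ⟨u, hu, hyeq⟩ := prime_decomp hp
      subst hyeq
      rcases eq_or_ne u [] with rfl | hune
      · exact ⟨{1}, WSpec.single⟩
      · have hul : u.length ≤ n := by
          have : (true :: (u ++ [false])).length = u.length + 2 := by simp
          omega
        obtain ⟨S, w⟩ := ih u hul hu hune
        exact ⟨oplusOne S, WSpec.step hu hune w⟩
    · have hltlen : m < y.length := by
        by_contra hcon
        push_neg at hcon
        rw [List.drop_eq_nil_of_le hcon] at hdrop
        exact hdrop rfl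
      have h1 : (y.take m).length ≤ n := by
        rw [List.length_take]
        omega
      have h2 : (y.drop m).length ≤ n := by
        rw [List.length_drop]
        omega
      obtain ⟨S₁, w₁⟩ := ih _ h1 hp.1 hp.2.1
      obtain ⟨S₂, w₂⟩ := ih _ h2 hd2 hdrop
      have := WSpec.app hp hd2 hdrop w₁ w₂
      rw [List.take_append_drop] at this
      exact ⟨S₁ + S₂, this⟩

end Aux

/-- For any nonempty Dyck word `y`, the number of (cyclic) descents of `y` equals
`|W(y)|`. -/
theorem descents_eq_W_card (y : List Bool) (hy : IsDyck y) (hne : y ≠ []) :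
    (∃ S, WSpec y S) ∧ ∀ S, WSpec y S → cyclicDescents y = S.card := by
  have hlast := dyck_getLast? hy hne
  refine ⟨wspec_exists y.length y le_rfl hy hne, ?_⟩
  intro S w
  rw [cyclic_eq_linD y hlast, linD_eq_desc, hlast]
  simp only [Option.some.injEq, Bool.false_eq_true, if_false, add_zero]
  exact wspec_card w
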